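/- arXiv:2506.04918 — 2 statements merged into one kernel-verified Lean document; each statement's English description precedes it below -/
import Mathlib

section
/- For n ≥ 2, ∫_{-1}^1 Q_n(x)² / (1 - x²) dx = 2 / (n(n-1)(2n-1)). -/
open intervalIntegral Finset Polynomial

/-- The `n`-th Legendre polynomial (as a function), via the Rodrigues formula,
normalized so that `legendreP n 1 = 1`. -/
noncomputable def legendreP (n : ℕ) : ℝ → ℝ :=
  fun x => (1 / (2 ^ n * (n.factorial : ℝ))) * iteratedDeriv n (fun y => (y ^ 2 - 1) ^ n) x

/-- `Qpoly n x = -∫_x^1 L_{n-1}(t) dt`. -/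
noncomputable def Qpoly (n : ℕ) : ℝ → ℝ :=
  fun x => -∫ t in x..(1 : ℝ), legendreP (n - 1) t

noncomputable def V (m k : ℕ) : ℝ[X] := derivative^[k] ((X^2 - 1)^m)

lemma V_succ (m k : ℕ) : V m (k+1) = derivative (V m k) := Function.iterate_succ_apply' _ _ _

lemma V_base (m : ℕ) : (X^2 - 1) * V m 1 = (2*m : ℝ[X]) * (X * V m 0) := by
  cases m with
  | zero => simp [V]
  | succ m =>
      simp only [V, Function.iterate_one, Function.iterate_zero, id_eq, derivative_pow,
        derivative_sub, derivative_one, derivative_X_pow, derivative_X, map_add, map_ofNat,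
        map_one, C_eq_natCast, mul_one]
      push_cast
      rw [pow_succ]
      ring

lemma V_key (m : ℕ) : ∀ k : ℕ, (X^2 - 1) * V m (k+2)
    + (2*(k+1) - 2*m : ℝ[X]) * (X * V m (k+1))
    + ((k+1)*k - 2*m*(k+1) : ℝ[X]) * V m k = 0 := by
  intro k
  induction k with
  | zero =>
      have hB := congrArg derivative (V_base m)
      simp only [derivative_mul, derivative_sub, derivative_one, derivative_X_pow,
        derivative_X, derivative_natCast, derivative_ofNat, ← V_succ, map_ofNat, C_eq_natCast, mul_one,
        zero_mul, add_zero, zero_add, Nat.cast_ofNat] at hB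
      push_cast at hB ⊢
      linear_combination hB
  | succ k ih =>
      have hd := congrArg derivative ih
      simp only [derivative_add, derivative_mul, derivative_sub, derivative_one,
        derivative_X_pow, derivative_X, derivative_natCast, ← V_succ, map_ofNat,
        C_eq_natCast, mul_one, zero_mul, add_zero, zero_add, derivative_zero,
        Nat.cast_ofNat, derivative_ofNat] at hd
      push_cast at hd ⊢
      linear_combination hd

lemma V_ode (m : ℕ) : derivative ((X^2 - 1) * V m (m+1)) = (m*(m+1) : ℝ[X]) * V m m := by
  have h := V_key m m
  simp only [derivative_mul, derivative_sub, derivative_one, derivative_X_pow,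
    derivative_X, ← V_succ, mul_one, Nat.cast_ofNat, map_ofNat, C_eq_natCast]
  push_cast at h ⊢
  linear_combination h

lemma V_factor (m : ℕ) : ∀ k, k ≤ m → ∃ g : ℝ[X], V m k = (X^2 - 1)^(m-k) * g := by
  intro k
  induction k with
  | zero => intro _; exact ⟨1, by simp [V]⟩
  | succ k ih =>
      intro hk
      obtain ⟨g, hg⟩ := ih (le_of_lt hk)
      obtain ⟨j, hj⟩ : ∃ j, m - k = j + 1 := ⟨m - (k+1), by omega⟩
      refine ⟨(j+1 : ℝ[X]) * (2*X) * g + (X^2-1) * derivative g, ?_⟩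
      have hmk : m - (k+1) = j := by omega
      rw [V_succ, hg, hj, hmk]
      simp only [derivative_mul, derivative_pow, derivative_sub, derivative_one,
        derivative_X_pow, derivative_X, mul_one, Nat.cast_ofNat, map_ofNat,
        C_eq_natCast, Nat.add_sub_cancel]
      push_cast
      ring

lemma V_eval_bd (m k : ℕ) (hk : k < m) (x : ℝ) (hx : x^2 = 1) : (V m k).eval x = 0 := by
  obtain ⟨g, hg⟩ := V_factor m k (le_of_lt hk)
  obtain ⟨j, hj⟩ : ∃ j, m - k = j + 1 := ⟨m - (k+1), by omega⟩
  rw [hg, hj]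
  simp [hx]

lemma pii (p : ℝ[X]) (a b : ℝ) : IntervalIntegrable (fun x => p.eval x) MeasureTheory.volume a b :=
  p.continuous.intervalIntegrable a b

lemma pftc (p : ℝ[X]) (a b : ℝ) :
    ∫ x in a..b, (derivative p).eval x = p.eval b - p.eval a :=
  intervalIntegral.integral_eq_sub_of_hasDerivAt (fun x _ => p.hasDerivAt x)
    (pii _ a b)

lemma pibp (p q : ℝ[X]) (a b : ℝ) :
    ∫ x in a..b, (derivative p).eval x * q.eval x =
      (p.eval b * q.eval b - p.eval a * q.eval a) - ∫ x in a..b, p.eval x * (derivative q).eval x := by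
  have h := pftc (p * q) a b
  rw [derivative_mul] at h
  have hsplit : ∫ x in a..b, (derivative p * q + p * derivative q).eval x
      = (∫ x in a..b, (derivative p).eval x * q.eval x)
        + ∫ x in a..b, p.eval x * (derivative q).eval x := by
    simp only [eval_add, eval_mul]
    exact intervalIntegral.integral_add
      (by simpa [eval_mul] using pii (derivative p * q) a b)
      (by simpa [eval_mul] using pii (p * derivative q) a b)
  rw [hsplit] at h
  simp only [eval_mul] at h
  linarith

lemma cont_pw (m : ℕ) : Continuous (fun x : ℝ => (1-x^2)^m) :=
  (continuous_const.sub (continuous_pow 2)).pow m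

lemma J_val (m : ℕ) : ∫ x in (-1:ℝ)..1, (1-x^2)^m
    = 2 * 4^m * (m.factorial : ℝ)^2 / ((2*m+1).factorial : ℝ) := by
  induction m with
  | zero => norm_num
  | succ m ih =>
      have hpoly : derivative (X * (1-X^2)^(m+1)) =
          (2*(m:ℕ)+3 : ℝ[X]) * (1-X^2)^(m+1) - (2*(m:ℕ)+2 : ℝ[X]) * (1-X^2)^m := by
        simp only [derivative_mul, derivative_pow, derivative_sub, derivative_one,
          derivative_X_pow, derivative_X, mul_one, Nat.cast_ofNat, map_ofNat,
          C_eq_natCast, Nat.add_sub_cancel]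
        push_cast
        ring
      have h := pftc (X * (1-X^2)^(m+1)) (-1) 1
      rw [hpoly] at h
      simp only [eval_sub, eval_mul, eval_add, eval_natCast, eval_ofNat, eval_pow,
        eval_one, eval_X, Nat.cast_ofNat] at h
      norm_num at h
      rw [intervalIntegral.integral_sub (f := fun x:ℝ => (2*(m:ℝ)+3) * (1-x^2)^(m+1))
          (g := fun x:ℝ => (2*(m:ℝ)+2) * (1-x^2)^m)
          ((continuous_const.mul (cont_pw (m+1))).intervalIntegrable _ _)
          ((continuous_const.mul (cont_pw m)).intervalIntegrable _ _),
        intervalIntegral.integral_const_mul, intervalIntegral.integral_const_mul] at h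
      rw [ih] at h
      have hfac : ((2*(m+1)+1).factorial : ℝ) = (2*(m:ℝ)+3) * ((2*(m:ℝ)+2) * ((2*m+1).factorial : ℝ)) := by
        rw [show 2*(m+1)+1 = (2*m+2)+1 from by ring, Nat.factorial_succ,
          show (2*m+2) = (2*m+1)+1 from rfl, Nat.factorial_succ]
        push_cast; ring
      have h3 : (2*(m:ℝ)+3) ≠ 0 := by positivity
      have hfp : ((2*m+1).factorial : ℝ) ≠ 0 := Nat.cast_ne_zero.mpr (Nat.factorial_ne_zero _)
      field_simp at h
      rw [hfac, show ((m+1).factorial : ℝ) = ((m:ℝ)+1) * m.factorial from by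
        exact_mod_cast Nat.factorial_succ m]
      rw [eq_div_iff (mul_ne_zero h3 (mul_ne_zero (by positivity) hfp))]
      push_cast
      linear_combination (2*(m:ℝ)+2) * h

lemma V_top (m : ℕ) : V m (2*m) = C (((2*m).factorial : ℝ)) := by
  have hX : derivative^[2*m] (X^(2*m) : ℝ[X]) = C (((2*m).factorial : ℝ)) := by
    rw [Polynomial.iterate_derivative_X_pow_eq_C_mul]
    simp [Nat.descFactorial_self]
  rcases Nat.eq_zero_or_pos m with hm | hm
  · subst hm; simp [V]
  have hmonic : ((X^2 - 1 : ℝ[X])).Monic := by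
    simpa using monic_X_pow_sub_C (1:ℝ) (two_ne_zero)
  have hmon : ((X^2 - 1 : ℝ[X])^m).Monic := hmonic.pow m
  have hdeg : ((X^2 - 1 : ℝ[X])^m).natDegree = 2*m := by
    rw [natDegree_pow]
    have : (X^2 - 1 : ℝ[X]).natDegree = 2 := by
      simpa using natDegree_X_pow_sub_C (n := 2) (r := (1:ℝ))
    rw [this]; ring
  set r : ℝ[X] := (X^2 - 1)^m - X^(2*m) with hr
  have hsplit : ((X^2 - 1 : ℝ[X])^m) = X^(2*m) + r := by ring
  have hrd : derivative^[2*m] r = 0 := by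
    rcases eq_or_ne r 0 with h0 | h0
    · simp [h0]
    apply Polynomial.iterate_derivative_eq_zero
    have hdlt : r.degree < ((X^2 - 1 : ℝ[X])^m).degree := by
      apply degree_sub_lt
      · rw [degree_X_pow, Polynomial.degree_eq_natDegree hmon.ne_zero, hdeg]
      · exact hmon.ne_zero
      · rw [hmon.leadingCoeff, leadingCoeff_X_pow]
    have hnd := Polynomial.natDegree_lt_natDegree h0 hdlt
    rwa [hdeg] at hnd
  rw [V, hsplit, iterate_map_add, hX, hrd, add_zero]

lemma V_descent (m : ℕ) : ∀ k, k ≤ m →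
    ∫ x in (-1:ℝ)..1, (V m (m+k)).eval x * (V m (m-k)).eval x
      = (-1:ℝ)^k * ∫ x in (-1:ℝ)..1, (V m m).eval x * (V m m).eval x := by
  intro k
  induction k with
  | zero => intro _; simp
  | succ k ih =>
      intro hk
      have h1 : V m (m+(k+1)) = derivative (V m (m+k)) := by
        rw [show m+(k+1) = (m+k)+1 from rfl, V_succ]
      have h2 : V m (m-k) = derivative (V m (m-(k+1))) := by
        rw [show m-k = (m-(k+1))+1 from by omega, V_succ]
      rw [h1]
      have hb : ∀ x : ℝ, x^2 = 1 → (V m (m-(k+1))).eval x = 0 :=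
        fun x hx => V_eval_bd m _ (by omega) x hx
      have := pibp (V m (m+k)) (V m (m-(k+1))) (-1) 1
      rw [hb 1 (by norm_num), hb (-1) (by norm_num), ← h2] at this
      rw [this, ih (by omega)]
      ring

lemma V_norm (m : ℕ) : ∫ x in (-1:ℝ)..1, (V m m).eval x * (V m m).eval x
    = ((2*m).factorial : ℝ) * (2 * 4^m * (m.factorial : ℝ)^2 / ((2*m+1).factorial : ℝ)) := by
  have h := V_descent m m le_rfl
  rw [show m + m = 2*m from by ring, V_top, Nat.sub_self] at h
  have h2 : ∫ x in (-1:ℝ)..1, (C (((2*m).factorial : ℝ))).eval x * (V m 0).eval x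
      = ((2*m).factorial : ℝ) * ((-1:ℝ)^m * (2 * 4^m * (m.factorial : ℝ)^2 / ((2*m+1).factorial : ℝ))) := by
    simp only [eval_C, V, Function.iterate_zero, id_eq]
    rw [intervalIntegral.integral_const_mul]
    congr 1
    have hptw : ∀ x:ℝ, ((X^2-1:ℝ[X])^m).eval x = (-1:ℝ)^m * (1-x^2)^m := by
      intro x
      simp only [eval_pow, eval_sub, eval_one, eval_X, ← neg_pow]
      congr 1
      ring
    simp only [hptw]
    rw [intervalIntegral.integral_const_mul, J_val]
  rw [h2] at h
  rcases Nat.even_or_odd m with he | ho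
  · simp only [he.neg_one_pow, one_mul] at h ⊢
    linarith
  · simp only [ho.neg_one_pow] at h ⊢
    linarith

noncomputable def Pl (m : ℕ) : ℝ[X] := C (1/(2^m * (m.factorial:ℝ))) * V m m

lemma iteratedDeriv_eval (p : ℝ[X]) (k : ℕ) :
    iteratedDeriv k (fun y => p.eval y) = fun x => (derivative^[k] p).eval x := by
  induction k with
  | zero => simp
  | succ k ih =>
      rw [iteratedDeriv_succ, ih]
      funext x
      rw [Function.iterate_succ_apply']
      exact Polynomial.deriv _

lemma legendre_eq (m : ℕ) : legendreP m = fun x => (Pl m).eval x := by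
  funext x
  unfold legendreP Pl
  have h : (fun y:ℝ => (y^2-1)^m) = fun y => ((X^2-1:ℝ[X])^m).eval y := by
    funext y; simp
  rw [h, iteratedDeriv_eval]
  simp [V, eval_mul]

lemma Pl_deriv (m : ℕ) : derivative (Pl m) = C (1/(2^m * (m.factorial:ℝ))) * V m (m+1) := by
  unfold Pl
  rw [derivative_C_mul, ← V_succ]

lemma Pl_ode (m : ℕ) :
    derivative ((X^2-1) * derivative (Pl m)) = (m*(m+1):ℝ[X]) * Pl m := by
  rw [Pl_deriv]
  rw [show (X^2-1 : ℝ[X]) * (C (1/(2^m * (m.factorial:ℝ))) * V m (m+1))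
      = C (1/(2^m * (m.factorial:ℝ))) * ((X^2-1) * V m (m+1)) from by ring]
  rw [derivative_C_mul, V_ode]
  unfold Pl
  ring

lemma Pl_norm (m : ℕ) :
    ∫ x in (-1:ℝ)..1, (Pl m).eval x * (Pl m).eval x = 2/(2*(m:ℝ)+1) := by
  simp only [Pl, eval_mul, eval_C]
  set c := 1/(2^m * (m.factorial:ℝ)) with hc
  have h : ∀ x:ℝ, c * (V m m).eval x * (c * (V m m).eval x)
      = c^2 * ((V m m).eval x * (V m m).eval x) := fun x => by ring
  simp only [h]
  rw [intervalIntegral.integral_const_mul, V_norm]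
  have h2 : ((2*m+1).factorial : ℝ) = (2*(m:ℝ)+1) * ((2*m).factorial : ℝ) := by
    rw [Nat.factorial_succ]; push_cast; ring
  have hf : (m.factorial : ℝ) ≠ 0 := Nat.cast_ne_zero.mpr (Nat.factorial_ne_zero _)
  have hf2 : ((2*m).factorial : ℝ) ≠ 0 := Nat.cast_ne_zero.mpr (Nat.factorial_ne_zero _)
  have h2p : (2:ℝ)^m ≠ 0 := by positivity
  have h4 : (4:ℝ)^m = (2^m)^2 := by rw [← pow_mul, show m*2 = 2*m from by ring, pow_mul]; norm_num
  rw [hc, h2, h4]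
  have h21 : (2*(m:ℝ)+1) ≠ 0 := by positivity
  field_simp

theorem stmt6 (n : ℕ) (hn : 2 ≤ n) :
    ∫ x in (-1 : ℝ)..1, (Qpoly n x) ^ 2 / (1 - x ^ 2) =
      2 / ((n : ℝ) * ((n : ℝ) - 1) * (2 * (n : ℝ) - 1)) := by
  set m := n - 1 with hmdef
  have hm : 1 ≤ m := by omega
  have hmr : (1:ℝ) ≤ (m:ℝ) := by exact_mod_cast hm
  have hMM : ((m:ℝ)*((m:ℝ)+1)) ≠ 0 := by positivity
  set c' : ℝ := 1/((m:ℝ)*((m:ℝ)+1)) with hc'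
  set A : ℝ[X] := C c' * ((X^2-1) * derivative (Pl m)) with hAdef
  have hcastMM : ((m:ℝ[X]) * ((m:ℝ[X])+1)) = C ((m:ℝ)*((m:ℝ)+1)) := by
    rw [map_mul, map_add, map_one, C_eq_natCast]
  have hA : derivative A = Pl m := by
    rw [hAdef, derivative_C_mul, Pl_ode, ← mul_assoc, hcastMM, ← map_mul, hc',
      one_div, inv_mul_cancel₀ hMM, map_one, one_mul]
  have hAbd : ∀ x : ℝ, x^2 = 1 → A.eval x = 0 := by
    intro x hx
    simp [hAdef, eval_mul, hx]
  have hQ : ∀ x : ℝ, Qpoly n x = A.eval x := by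
    intro x
    unfold Qpoly
    rw [legendre_eq]
    have h := pftc A x 1
    rw [hA, hAbd 1 (by norm_num)] at h
    rw [← hmdef]
    simp only [h]
    ring
  set B : ℝ[X] := C (c'^2) * ((1-X^2) * (derivative (Pl m))^2) with hBdef
  have hint : ∀ x : ℝ, (Qpoly n x)^2 / (1-x^2) = B.eval x := by
    intro x
    rw [hQ]
    by_cases hx : (1:ℝ) - x^2 = 0
    · rw [hx, div_zero]
      simp [hBdef, eval_mul, eval_pow, eval_sub, eval_one, eval_X, hx]
    · simp only [hAdef, hBdef, eval_mul, eval_C, eval_pow, eval_sub, eval_one, eval_X]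
      rw [div_eq_iff hx]
      ring
  have hkey : (1-X^2 : ℝ[X]) * (derivative (Pl m))^2
      = derivative ((1-X^2) * derivative (Pl m) * (Pl m))
        + (m*(m+1):ℝ[X]) * ((Pl m) * (Pl m)) := by
    have hode := Pl_ode m
    simp only [derivative_mul, derivative_sub, derivative_one, derivative_X_pow,
      derivative_X, mul_one, Nat.cast_ofNat, map_ofNat, C_eq_natCast] at hode ⊢
    linear_combination (Pl m) * hode
  simp only [hint]
  have hev2 : ∀ x:ℝ, B.eval x = c'^2 * ((1-X^2 : ℝ[X]) * (derivative (Pl m))^2).eval x :=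
    fun x => by simp [hBdef]
  simp only [hev2]
  rw [intervalIntegral.integral_const_mul]
  have hsp : (∫ x in (-1:ℝ)..1, ((1-X^2 : ℝ[X]) * (derivative (Pl m))^2).eval x)
      = ((m:ℝ)*((m:ℝ)+1)) * (2/(2*(m:ℝ)+1)) := by
    simp only [hkey]
    have hev : ∀ x:ℝ, (derivative ((1-X^2) * derivative (Pl m) * (Pl m))
        + (m*(m+1):ℝ[X]) * ((Pl m) * (Pl m))).eval x
        = (derivative ((1-X^2) * derivative (Pl m) * (Pl m))).eval x
          + ((m:ℝ)*((m:ℝ)+1)) * ((Pl m).eval x * (Pl m).eval x) := fun x => by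
      simp
    simp only [hev]
    rw [intervalIntegral.integral_add
      (g := fun x:ℝ => ((m:ℝ)*((m:ℝ)+1)) * ((Pl m).eval x * (Pl m).eval x)) (pii _ _ _)
      ((continuous_const.mul ((Pl m).continuous.mul (Pl m).continuous)).intervalIntegrable _ _),
      intervalIntegral.integral_const_mul, pftc, Pl_norm]
    simp [eval_mul]
  rw [hsp]
  have hcast : (m:ℝ) = (n:ℝ) - 1 := by
    rw [hmdef]
    push_cast [Nat.cast_sub (by omega : 1 ≤ n)]
    ring
  rw [hc', hcast]
  have hn2 : (2:ℝ) ≤ (n:ℝ) := by exact_mod_cast hn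
  have h1 : (n:ℝ) - 1 > 0 := by linarith
  have h2 : (0:ℝ) < n := by linarith
  have h3 : 2*(n:ℝ) - 1 > 0 := by linarith
  have h1' := ne_of_gt h1
  have h2' := ne_of_gt h2
  have h3' := ne_of_gt h3
  field_simp
  ring_nf
  have h3'' : (-1 + (n:ℝ)*2) ≠ 0 := by linarith
  field_simp
end

section
/- For n, m ≥ 2 with n ≠ m, ∫_{-1}^1 P_n(x) P_m(x) (1 - x)/(1 + x) dx = 0; the polar Legendre polynomials are orthogonal on [-1,1] with respect to the weight (1-x)/(1+x). -/
open intervalIntegral Finset Polynomial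

open MeasureTheory

noncomputable def legP (n : ℕ) : ℝ[X] := ((X^2 - 1 : ℝ[X]))^n

lemma iteratedDeriv_polyeval (p : ℝ[X]) (n : ℕ) :
    iteratedDeriv n (fun y => p.eval y) = fun y => (derivative^[n] p).eval y := by
  induction n with
  | zero => simp
  | succ n ih =>
    rw [iteratedDeriv_succ, ih]
    funext x
    rw [Function.iterate_succ_apply']
    exact (Polynomial.hasDerivAt _ x).deriv

lemma legendreP_eq (n : ℕ) : legendreP n =
    fun x => (1 / (2 ^ n * (n.factorial : ℝ))) * (derivative^[n] (legP n)).eval x := by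
  funext x
  have h : (fun y : ℝ => (y ^ 2 - 1) ^ n) = fun y => (legP n).eval y := by
    funext y; simp [legP]
  rw [legendreP, h, iteratedDeriv_polyeval]

lemma continuous_legendreP (n : ℕ) : Continuous (legendreP n) := by
  rw [legendreP_eq]
  exact continuous_const.mul (Polynomial.continuous _)

lemma dvd_derivative {a : ℝ} {p : ℝ[X]} {j : ℕ} (h : (X - C a)^(j+1) ∣ p) :
    (X - C a)^j ∣ derivative p := by
  obtain ⟨q, rfl⟩ := h
  rw [derivative_mul, derivative_pow]
  apply dvd_add
  · exact dvd_mul_of_dvd_left (dvd_mul_of_dvd_left (dvd_mul_left _ _) _) _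
  · exact dvd_mul_of_dvd_left (pow_dvd_pow _ (Nat.le_succ j)) _

lemma dvd_iterate {a : ℝ} : ∀ (k : ℕ) (p : ℝ[X]) (j : ℕ),
    (X - C a)^(j+k) ∣ p → (X - C a)^j ∣ derivative^[k] p := by
  intro k
  induction k with
  | zero => intro p j h; simpa using h
  | succ k ih =>
    intro p j h
    rw [Function.iterate_succ_apply]
    exact ih _ j (dvd_derivative (by rwa [show j + k + 1 = j + (k+1) by ring]))

lemma eval_iterate_legP {n k : ℕ} (hk : k < n) {a : ℝ} (ha : a = 1 ∨ a = -1) :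
    (derivative^[k] (legP n)).eval a = 0 := by
  have hdvd : (X - C a)^((n - k) + k) ∣ legP n := by
    have h2 : (X - C a) ∣ (X^2 - 1 : ℝ[X]) := by
      rcases ha with rfl | rfl
      · exact ⟨X + C 1, by simp; ring⟩
      · exact ⟨X - C 1, by simp; ring⟩
    calc (X - C a)^((n - k) + k) ∣ (X - C a)^n := pow_dvd_pow _ (by omega)
    _ ∣ legP n := pow_dvd_pow_of_dvd h2 n
  obtain ⟨q, hq⟩ := dvd_iterate k (legP n) (n - k) hdvd
  rw [hq, eval_mul, eval_pow, eval_sub, eval_X, eval_C, sub_self,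
    zero_pow (by omega : n - k ≠ 0), zero_mul]

lemma ibp_step {n k : ℕ} (hk : k + 1 ≤ n) (q : ℝ[X]) :
    ∫ x in (-1:ℝ)..1, (derivative^[n-k] (legP n)).eval x * q.eval x =
    - ∫ x in (-1:ℝ)..1, (derivative^[n-(k+1)] (legP n)).eval x * (derivative q).eval x := by
  have hiter : derivative (derivative^[n-(k+1)] (legP n)) = derivative^[n-k] (legP n) := by
    rw [show n - k = (n - (k+1)) + 1 by omega, Function.iterate_succ_apply']
  have h := integral_mul_deriv_eq_deriv_mul
    (u := fun x => q.eval x) (u' := fun x => (derivative q).eval x)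
    (v := fun x => (derivative^[n-(k+1)] (legP n)).eval x)
    (v' := fun x => (derivative^[n-k] (legP n)).eval x)
    (a := (-1:ℝ)) (b := 1)
    (fun x _ => Polynomial.hasDerivAt q x)
    (fun x _ => by rw [← hiter]; exact Polynomial.hasDerivAt _ x)
    ((Polynomial.continuous _).intervalIntegrable _ _)
    ((Polynomial.continuous _).intervalIntegrable _ _)
  have e1 : (derivative^[n-(k+1)] (legP n)).eval (1:ℝ) = 0 :=
    eval_iterate_legP (by omega) (Or.inl rfl)
  have e2 : (derivative^[n-(k+1)] (legP n)).eval (-1:ℝ) = 0 :=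
    eval_iterate_legP (by omega) (Or.inr rfl)
  simp only [e1, e2, mul_zero, zero_mul, sub_zero, zero_sub] at h
  calc ∫ x in (-1:ℝ)..1, (derivative^[n-k] (legP n)).eval x * q.eval x
      = ∫ x in (-1:ℝ)..1, q.eval x * (derivative^[n-k] (legP n)).eval x := by
        simp only [mul_comm]
    _ = - ∫ x in (-1:ℝ)..1, (derivative q).eval x * (derivative^[n-(k+1)] (legP n)).eval x := h
    _ = _ := by simp only [mul_comm]

lemma integral_DnP_mul (n : ℕ) : ∀ (k : ℕ), k ≤ n → ∀ q : ℝ[X],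
    ∫ x in (-1:ℝ)..1, (derivative^[n] (legP n)).eval x * q.eval x =
    (-1:ℝ)^k * ∫ x in (-1:ℝ)..1,
      (derivative^[n-k] (legP n)).eval x * (derivative^[k] q).eval x := by
  intro k
  induction k with
  | zero => intro _ q; simp
  | succ k ih =>
    intro hk q
    rw [ih (by omega) q, ibp_step hk, Function.iterate_succ_apply']
    ring

lemma orth {n : ℕ} (hn : 1 ≤ n) {q : ℝ[X]} (hq : q.natDegree < n) :
    ∫ x in (-1:ℝ)..1, legendreP n x * q.eval x = 0 := by
  have h := integral_DnP_mul n n le_rfl q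
  rw [Polynomial.iterate_derivative_eq_zero hq] at h
  simp only [eval_zero, mul_zero, intervalIntegral.integral_zero] at h
  rw [legendreP_eq]
  simp only [mul_assoc]
  rw [intervalIntegral.integral_const_mul, h, mul_zero]

lemma integral_legendreP (n : ℕ) (hn : 1 ≤ n) :
    ∫ x in (-1:ℝ)..1, legendreP n x = 0 := by
  have h := orth hn (q := 1) (by simp; omega)
  simpa using h

lemma exists_antideriv (p : ℝ[X]) :
    ∃ q : ℝ[X], derivative q = p ∧ q.natDegree ≤ p.natDegree + 1 := by
  refine ⟨p.sum fun k a => C (a / (k+1)) * X^(k+1), ?_, ?_⟩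
  · conv_rhs => rw [← p.sum_C_mul_X_pow_eq]
    rw [Polynomial.sum, Polynomial.sum, map_sum]
    apply Finset.sum_congr rfl
    intro k _
    rw [derivative_C_mul, derivative_X_pow, ← mul_assoc, ← C_mul]
    push_cast
    rw [div_mul_cancel₀ _ (by positivity : (k:ℝ) + 1 ≠ 0)]
  · rw [Polynomial.sum]
    apply natDegree_sum_le_of_forall_le
    intro k hk
    exact le_trans (natDegree_C_mul_le _ _)
      (by simpa using Nat.succ_le_succ (le_natDegree_of_mem_supp k hk))

lemma aux (n m : ℕ) (hn : 2 ≤ n) (hm : 2 ≤ m) (hlt : n < m)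
    (Pn Pm : Polynomial ℝ) (hdegn : Pn.degree = n) (hdegm : Pm.degree = m)
    (hdefn : ∀ x : ℝ, -((n : ℝ) + 1) * ∫ t in x..(1 : ℝ), legendreP n t = (x - 1) * Pn.eval x)
    (hdefm : ∀ x : ℝ, -((m : ℝ) + 1) * ∫ t in x..(1 : ℝ), legendreP m t = (x - 1) * Pm.eval x) :
    ∫ x in (-1 : ℝ)..1, Pn.eval x * Pm.eval x * ((1 - x) / (1 + x)) = 0 := by
  have hintn : ∫ t in (-1:ℝ)..1, legendreP n t = 0 := integral_legendreP n (by omega)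
  have hintm : ∫ t in (-1:ℝ)..1, legendreP m t = 0 := integral_legendreP m (by omega)
  have hPn1 : Pn.eval (-1) = 0 := by
    have h := hdefn (-1)
    rw [hintn] at h
    norm_num at h
    linarith
  obtain ⟨Rn, hRn⟩ : (X - C (-1)) ∣ Pn := dvd_iff_isRoot.mpr hPn1
  have hPn0 : Pn ≠ 0 := fun h0 => by simp [h0] at hdegn
  have hRn0 : Rn ≠ 0 := by rintro rfl; simp [hRn] at hPn0
  have hndeg : Pn.natDegree = n := natDegree_eq_of_degree_eq_some hdegn
  have hRdeg : Rn.natDegree = n - 1 := by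
    have := natDegree_mul (X_sub_C_ne_zero (-1)) hRn0
    rw [← hRn, hndeg, natDegree_X_sub_C] at this
    omega
  obtain ⟨S, hS, hSdeg⟩ := exists_antideriv Rn
  have hSlt : S.natDegree < m := by omega
  set G : ℝ → ℝ := fun x => ∫ t in x..(1:ℝ), legendreP m t with hGdef
  have hGeq : G = fun x => -(∫ t in (1:ℝ)..x, legendreP m t) := by
    funext y; rw [hGdef]; exact intervalIntegral.integral_symm _ _
  have hGd : ∀ x : ℝ, HasDerivAt G (-(legendreP m x)) x := by
    intro x
    rw [hGeq]
    exact (intervalIntegral.integral_hasDerivAt_right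
      (((continuous_legendreP m)).intervalIntegrable _ _)
      ((continuous_legendreP m).stronglyMeasurableAtFilter _ _)
      (continuous_legendreP m).continuousAt).neg
  have hG1 : G 1 = 0 := intervalIntegral.integral_same
  have hGm1 : G (-1) = 0 := hintm
  have key : ∫ x in (-1:ℝ)..1, Pn.eval x * Pm.eval x * ((1 - x) / (1 + x)) =
      ∫ x in (-1:ℝ)..1, ((m:ℝ)+1) * (Rn.eval x * G x) := by
    apply intervalIntegral.integral_congr_ae
    apply MeasureTheory.ae_of_all
    intro x hx
    rw [Set.uIoc_of_le (by norm_num : (-1:ℝ) ≤ 1)] at hx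
    have hx1 : (1:ℝ) + x ≠ 0 := by have := hx.1; intro h; linarith
    have hGx : G x = ∫ t in x..(1:ℝ), legendreP m t := rfl
    have hm' : ((m:ℝ)+1) * G x = (1-x) * Pm.eval x := by
      have h := hdefm x
      rw [← hGx] at h
      linarith
    have hPnx : Pn.eval x = (x+1) * Rn.eval x := by
      rw [hRn, eval_mul, eval_sub, eval_X, eval_C]; ring
    have h2 : ((m:ℝ)+1) * (Rn.eval x * G x) = Rn.eval x * ((1-x) * Pm.eval x) := by
      rw [← hm']; ring
    rw [hPnx, h2]
    field_simp
    ring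
  rw [key, intervalIntegral.integral_const_mul]
  have hibp := integral_mul_deriv_eq_deriv_mul
    (u := G) (u' := fun x => -(legendreP m x))
    (v := fun x => S.eval x) (v' := fun x => Rn.eval x)
    (a := (-1:ℝ)) (b := 1)
    (fun x _ => hGd x)
    (fun x _ => by rw [← hS]; exact Polynomial.hasDerivAt _ x)
    (((continuous_legendreP m).neg).intervalIntegrable _ _)
    ((Polynomial.continuous _).intervalIntegrable _ _)
  simp only [hG1, hGm1, zero_mul, sub_zero, zero_sub, neg_mul, intervalIntegral.integral_neg,
    sub_neg_eq_add, zero_add] at hibp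
  have horth : ∫ x in (-1:ℝ)..1, legendreP m x * S.eval x = 0 := orth (by omega) hSlt
  have : ∫ x in (-1:ℝ)..1, Rn.eval x * G x = 0 := by
    calc ∫ x in (-1:ℝ)..1, Rn.eval x * G x
        = ∫ x in (-1:ℝ)..1, G x * Rn.eval x := by simp only [mul_comm]
      _ = 0 := by rw [hibp, horth]
  rw [this, mul_zero]

theorem stmt12 (n m : ℕ) (hn : 2 ≤ n) (hm : 2 ≤ m) (hnm : n ≠ m)
    (Pn Pm : Polynomial ℝ) (hdegn : Pn.degree = n) (hdegm : Pm.degree = m)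
    (hdefn : ∀ x : ℝ, -((n : ℝ) + 1) * ∫ t in x..(1 : ℝ), legendreP n t = (x - 1) * Pn.eval x)
    (hdefm : ∀ x : ℝ, -((m : ℝ) + 1) * ∫ t in x..(1 : ℝ), legendreP m t = (x - 1) * Pm.eval x) :
    ∫ x in (-1 : ℝ)..1, Pn.eval x * Pm.eval x * ((1 - x) / (1 + x)) = 0 := by
  rcases Nat.lt_or_ge n m with hlt | hge
  · exact aux n m hn hm hlt Pn Pm hdegn hdegm hdefn hdefm
  · have hlt : m < n := lt_of_le_of_ne hge (Ne.symm hnm)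
    have h := aux m n hm hn hlt Pm Pn hdegm hdegn hdefm hdefn
    have hcomm : Set.EqOn (fun x : ℝ => Pn.eval x * Pm.eval x * ((1 - x) / (1 + x)))
        (fun x : ℝ => Pm.eval x * Pn.eval x * ((1 - x) / (1 + x))) (Set.uIcc (-1:ℝ) 1) :=
      fun x _ => by ring
    rw [intervalIntegral.integral_congr hcomm]
    exact h
end
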